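/- Let A ∈ B(E,F) be a finite-rank operator with rank A = k, with generalized inverse A⁺, and let T ∈ B(E,F) satisfy ‖T − A‖ < ‖A⁺‖⁻¹ and rank T = k. Then R(T) ∩ N(A⁺) = {0}. -/

import Mathlib

open ContinuousLinearMap

variable {E F : Type*} [NormedAddCommGroup E] [NormedSpace ℝ E] [CompleteSpace E]
  [NormedAddCommGroup F] [NormedSpace ℝ F] [CompleteSpace F]

set_option maxHeartbeats 1000000 in
theorem stmt9 (A T : E →L[ℝ] F) (Ap : F →L[ℝ] E)
    (h1 : A ∘L (Ap ∘L A) = A) (h2 : Ap ∘L (A ∘L Ap) = Ap)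
    (k : ℕ) (hfinA : FiniteDimensional ℝ (LinearMap.range (A : E →ₗ[ℝ] F)))
    (hrankA : Module.finrank ℝ (LinearMap.range (A : E →ₗ[ℝ] F)) = k)
    (hT : ‖T - A‖ < ‖Ap‖⁻¹)
    (hfinT : FiniteDimensional ℝ (LinearMap.range (T : E →ₗ[ℝ] F)))
    (hrankT : Module.finrank ℝ (LinearMap.range (T : E →ₗ[ℝ] F)) = k) :
    LinearMap.range (T : E →ₗ[ℝ] F) ⊓ LinearMap.ker (Ap : F →ₗ[ℝ] E) = ⊥ := by
  -- Ap ≠ 0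
  have hAp0 : 0 < ‖Ap‖ := by
    rcases (norm_nonneg Ap).lt_or_eq with h | h
    · exact h
    · exfalso
      rw [← h, inv_zero] at hT
      exact absurd hT (not_lt.2 (norm_nonneg _))
  have hsmall : ‖Ap‖ * ‖T - A‖ < 1 := by
    have h' := mul_lt_mul_of_pos_left hT hAp0
    rwa [mul_inv_cancel₀ (ne_of_gt hAp0)] at h'
  -- pointwise identity from h1
  have hA1 : ∀ x, A (Ap (A x)) = A x := by
    intro x
    have := congrArg (fun f : E →L[ℝ] F => f x) h1
    simpa using this
  -- the projection P = Ap ∘ A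
  set P : E →L[ℝ] E := Ap ∘L A with hPdef
  have hPP : ∀ x, P (P x) = P x := by
    intro x
    simp [hPdef, hA1 x]
  set M : Submodule ℝ E := LinearMap.range (P : E →ₗ[ℝ] E) with hMdef
  have hPfix : ∀ m ∈ M, P m = m := by
    rintro m ⟨x, rfl⟩
    exact hPP x
  -- M is the image of range A under Ap
  have hMmap : M = Submodule.map (Ap : F →ₗ[ℝ] E) (LinearMap.range (A : E →ₗ[ℝ] F)) := by
    rw [hMdef]
    ext y
    constructor
    · rintro ⟨x, rfl⟩
      exact ⟨A x, ⟨x, rfl⟩, rfl⟩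
    · rintro ⟨z, ⟨x, rfl⟩, rfl⟩
      exact ⟨x, rfl⟩
  have hMfin : FiniteDimensional ℝ M := by
    rw [hMmap]; infer_instance
  -- finrank M = k
  have hMle : Module.finrank ℝ M ≤ k := by
    rw [hMmap, ← hrankA]
    exact Submodule.finrank_map_le _ _
  have hMge : k ≤ Module.finrank ℝ M := by
    -- range A = map A M
    have hrA : LinearMap.range (A : E →ₗ[ℝ] F) = Submodule.map (A : E →ₗ[ℝ] F) M := by
      ext y
      constructor
      · rintro ⟨x, rfl⟩
        exact ⟨P x, ⟨x, rfl⟩, hA1 x⟩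
      · rintro ⟨m, _, rfl⟩
        exact ⟨m, rfl⟩
    calc k = Module.finrank ℝ (LinearMap.range (A : E →ₗ[ℝ] F)) := hrankA.symm
      _ = Module.finrank ℝ (Submodule.map (A : E →ₗ[ℝ] F) M) := by rw [← hrA]
      _ ≤ Module.finrank ℝ M := Submodule.finrank_map_le _ _
  have hMrank : Module.finrank ℝ M = k := le_antisymm hMle hMge
  -- S = Ap ∘ T is injective on M
  set S : E →L[ℝ] E := Ap ∘L T with hSdef
  have hSinj : ∀ m ∈ M, S m = 0 → m = 0 := by
    intro m hm hSm
    by_contra hm0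
    have hmpos : 0 < ‖m‖ := norm_pos_iff.2 hm0
    have key : m = -(Ap ((T - A) m)) := by
      have : S m = m + Ap ((T - A) m) := by
        have h' : Ap (T m) = Ap (A m) + Ap ((T - A) m) := by
          rw [← map_add]
          congr 1
          simp
        calc S m = Ap (T m) := rfl
          _ = Ap (A m) + Ap ((T - A) m) := h'
          _ = m + Ap ((T - A) m) := by
              have := hPfix m hm
              rw [hPdef] at this
              simp only [comp_apply] at this
              rw [this]
      rw [this] at hSm
      linear_combination (norm := abel) hSm
    have hb : ‖m‖ ≤ ‖Ap‖ * (‖T - A‖ * ‖m‖) := by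
      calc ‖m‖ = ‖Ap ((T - A) m)‖ := by
              conv_lhs => rw [key]
              rw [norm_neg]
        _ ≤ ‖Ap‖ * ‖(T - A) m‖ := Ap.le_opNorm _
        _ ≤ ‖Ap‖ * (‖T - A‖ * ‖m‖) := by
            gcongr
            exact (T - A).le_opNorm m
    nlinarith [hsmall, hmpos]
  -- restriction of S to M
  let φ : M →ₗ[ℝ] E := (S : E →ₗ[ℝ] E).domRestrict M
  have hφinj : Function.Injective φ := by
    rw [injective_iff_map_eq_zero]
    rintro ⟨m, hm⟩ h
    have : S m = 0 := h
    exact Subtype.ext (hSinj m hm this)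
  have hφrange : Module.finrank ℝ (LinearMap.range φ) = k := by
    rw [LinearMap.finrank_range_of_inj hφinj, hMrank]
  -- range φ ≤ map Ap (range T)
  have hle : LinearMap.range φ ≤ Submodule.map (Ap : F →ₗ[ℝ] E) (LinearMap.range (T : E →ₗ[ℝ] F)) := by
    rintro y ⟨⟨m, hm⟩, rfl⟩
    exact ⟨T m, ⟨m, rfl⟩, rfl⟩
  have hmapfin : FiniteDimensional ℝ (Submodule.map (Ap : F →ₗ[ℝ] E) (LinearMap.range (T : E →ₗ[ℝ] F))) := by
    infer_instance
  have hmaprank : Module.finrank ℝ (Submodule.map (Ap : F →ₗ[ℝ] E) (LinearMap.range (T : E →ₗ[ℝ] F))) = k := by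
    refine le_antisymm ?_ ?_
    · rw [← hrankT]; exact Submodule.finrank_map_le _ _
    · rw [← hφrange]; exact Submodule.finrank_mono hle
  -- Ap restricted to range T
  let ψ : LinearMap.range (T : E →ₗ[ℝ] F) →ₗ[ℝ] E := (Ap : F →ₗ[ℝ] E).domRestrict (LinearMap.range (T : E →ₗ[ℝ] F))
  have hψrange : LinearMap.range ψ = Submodule.map (Ap : F →ₗ[ℝ] E) (LinearMap.range (T : E →ₗ[ℝ] F)) :=
    LinearMap.range_domRestrict _ _
  have hker : LinearMap.ker ψ = ⊥ := by
    have hrn := LinearMap.finrank_range_add_finrank_ker ψ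
    rw [hψrange, hmaprank, hrankT] at hrn
    have : Module.finrank ℝ (LinearMap.ker ψ) = 0 := by omega
    exact Submodule.finrank_eq_zero.1 this
  -- conclude
  rw [Submodule.eq_bot_iff]
  rintro y ⟨hyT, hyK⟩
  have hy0 : ψ ⟨y, hyT⟩ = 0 := hyK
  have : (⟨y, hyT⟩ : LinearMap.range (T : E →ₗ[ℝ] F)) = 0 := by
    rw [← LinearMap.mem_ker, hker] at hy0
    exact hy0
  exact congrArg Subtype.val this
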